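/- Let Φ(u) ∈ ℂ[[u]] be a formal power series with constant term 1, and let f(z) be the unique formal power series with f(0)=0 solving f(z) = z·Φ(f(z)). Then for every N ≥ 1, the N-th coefficient of f is (1/N)·[u^{N−1}] Φ(u)^N. -/

import Mathlib

open PowerSeries

open Finset

-- low-coefficient congruence for powers
lemma aux_pow_congr {A B : PowerSeries ℂ} {m : ℕ}
    (h : ∀ j ≤ m, coeff j A = coeff j B) (k : ℕ) :
    ∀ i ≤ m, coeff i (A ^ k) = coeff i (B ^ k) := by
  induction k with
  | zero => intro i _; rfl
  | succ k ih =>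
    intro i hi
    rw [pow_succ, pow_succ, coeff_mul, coeff_mul]
    refine Finset.sum_congr rfl fun p hp => ?_
    rw [Finset.HasAntidiagonal.mem_antidiagonal] at hp
    rw [ih p.1 (by omega), h p.2 (by omega)]

-- vanishing of high powers' low coefficients
lemma aux_pow_vanish {f : PowerSeries ℂ} (hf0 : coeff 0 f = 0) :
    ∀ j n : ℕ, n < j → coeff n (f ^ j) = 0 := by
  intro j n hnj
  have hd : (PowerSeries.X : PowerSeries ℂ) ∣ f := PowerSeries.X_dvd_iff.mpr (by rwa [← coeff_zero_eq_constantCoeff])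
  obtain ⟨g, hg⟩ := hd
  rw [hg, mul_pow, PowerSeries.coeff_X_pow_mul', if_neg (by omega)]

lemma aux_coeff_aeval {f : PowerSeries ℂ} (hf0 : coeff 0 f = 0) (P : Polynomial ℂ) (n : ℕ) :
    coeff n (Polynomial.aeval f P) =
      ∑ j ∈ Finset.range (n + 1), P.coeff j * coeff n (f ^ j) := by
  classical
  set M := max P.natDegree n with hM
  rw [Polynomial.aeval_eq_sum_range' (n := M + 1) (by omega) f, map_sum]
  have h1 : ∑ j ∈ Finset.range (M + 1), coeff n (P.coeff j • f ^ j)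
      = ∑ j ∈ Finset.range (M + 1), P.coeff j * coeff n (f ^ j) := by
    refine Finset.sum_congr rfl fun j _ => ?_
    rw [map_smul, smul_eq_mul]
  rw [h1]
  symm
  apply Finset.sum_subset
  · intro x hx; simp only [Finset.mem_range] at *; omega
  · intro x _ hx
    simp only [Finset.mem_range] at hx
    rw [aux_pow_vanish hf0 x n (by omega), mul_zero]

lemma aux_sum_deriv (A B : PowerSeries ℂ) (m : ℕ) (hm : 1 ≤ m) :
    ∑ j ∈ Finset.range (m + 1), (j : ℂ) * coeff j A * coeff (m - j) B
      = coeff (m - 1) (d⁄dX ℂ A * B) := by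
  rw [coeff_mul, Finset.Nat.sum_antidiagonal_eq_sum_range_succ_mk]
  have hm1 : (m - 1).succ = m := by omega
  rw [hm1]
  rw [Finset.sum_range_succ']
  simp only [Nat.cast_zero, zero_mul, add_zero]
  refine Finset.sum_congr rfl fun i _ => ?_
  rw [coeff_derivative]
  have h1 : m - (i + 1) = m - 1 - i := by omega
  rw [h1]
  push_cast
  ring

lemma aux_deriv_pow (Φ : PowerSeries ℂ) {k : ℕ} (hk : 1 ≤ k) :
    d⁄dX ℂ (Φ ^ k) = k • (Φ ^ (k - 1) * d⁄dX ℂ Φ) := by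
  rw [Derivation.leibniz_pow, smul_eq_mul]

lemma aux_deriv_mul (Φ : PowerSeries ℂ) {n k m : ℕ} (hk : 1 ≤ k) (hm : k + m = n) :
    (n • (d⁄dX ℂ (Φ ^ k) * Φ ^ m) : PowerSeries ℂ) = k • d⁄dX ℂ (Φ ^ n) := by
  have hn : 1 ≤ n := by omega
  have key : Φ ^ (k - 1) * d⁄dX ℂ Φ * Φ ^ m = Φ ^ (n - 1) * d⁄dX ℂ Φ := by
    rw [mul_right_comm, ← pow_add]
    congr 2
    omega
  rw [aux_deriv_pow Φ hk, aux_deriv_pow Φ hn, smul_mul_assoc, key, smul_comm]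

lemma aux_recursion (Φ f : PowerSeries ℂ) (hf0 : PowerSeries.coeff 0 f = 0)
    (hfe : ∀ n : ℕ, PowerSeries.coeff (n + 1) f =
      ∑ k ∈ Finset.range (n + 1), PowerSeries.coeff k Φ * PowerSeries.coeff n (f ^ k))
    {n k : ℕ} (hkn : k ≤ n) :
    coeff n (f ^ k) =
      ∑ j ∈ Finset.range (n - k + 1), coeff j (Φ ^ k) * coeff (n - k) (f ^ j) := by
  classical
  set G : PowerSeries ℂ :=
    PowerSeries.mk (fun i => ∑ k ∈ Finset.range (i + 1),
      coeff k Φ * coeff i (f ^ k)) with hG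
  have hfX : f = PowerSeries.X * G := by
    ext i
    cases i with
    | zero =>
      simp [hf0]
    | succ i => rw [hfe i, coeff_succ_X_mul, hG, coeff_mk]
  set T : Polynomial ℂ := trunc (n + 1) Φ with hT
  have hTc : ∀ j ≤ n, coeff j (T : PowerSeries ℂ) = coeff j Φ := by
    intro j hj
    rw [Polynomial.coeff_coe, hT, coeff_trunc, if_pos (by omega)]
  have hGa : ∀ j ≤ n, coeff j G = coeff j (Polynomial.aeval f T) := by
    intro j hj
    rw [hG, coeff_mk, aux_coeff_aeval hf0]
    refine Finset.sum_congr rfl fun i hi => ?_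
    rw [Finset.mem_range] at hi
    rw [hT, coeff_trunc, if_pos (by omega)]
  have h1 : coeff n (f ^ k) = coeff (n - k) (G ^ k) := by
    rw [hfX, mul_pow, PowerSeries.coeff_X_pow_mul', if_pos hkn]
  rw [h1, aux_pow_congr hGa k (n - k) (by omega), ← map_pow, aux_coeff_aeval hf0]
  refine Finset.sum_congr rfl fun j hj => ?_
  rw [Finset.mem_range] at hj
  congr 1
  rw [← Polynomial.coeff_coe, Polynomial.coe_pow]
  exact aux_pow_congr hTc k j (by omega)

/-- Lagrange–Bürmann inversion: if `Φ ∈ ℂ[[u]]` has constant term `1` and `f` is the unique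
formal power series with zero constant term satisfying `f(z) = z·Φ(f(z))` (encoded
coefficientwise: the `(n+1)`-st coefficient of `f` is the `n`-th coefficient of `Φ(f)`,
where `coeff n (Φ(f)) = ∑_{k ≤ n} Φ_k · coeff n (f^k)` since `f` has zero constant term),
then `[z^N] f = (1/N)·[u^{N-1}] Φ^N` for all `N ≥ 1`. -/
theorem stmt_15 (Φ f : PowerSeries ℂ)
    (hΦ : PowerSeries.constantCoeff Φ = 1)
    (hf0 : PowerSeries.coeff 0 f = 0)
    (hfe : ∀ n : ℕ, PowerSeries.coeff (n + 1) f =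
      ∑ k ∈ Finset.range (n + 1), PowerSeries.coeff k Φ * PowerSeries.coeff n (f ^ k)) :
    ∀ N : ℕ, 1 ≤ N →
      PowerSeries.coeff N f = (1 / (N : ℂ)) * PowerSeries.coeff (N - 1) (Φ ^ N) := by
  have key : ∀ n : ℕ, ∀ k : ℕ, 1 ≤ k → k ≤ n →
      (n : ℂ) * coeff n (f ^ k) = (k : ℂ) * coeff (n - k) (Φ ^ n) := by
    intro n
    induction n using Nat.strong_induction_on with
    | _ n IH =>
      intro k hk1 hkn
      have hrec := aux_recursion Φ f hf0 hfe hkn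
      by_cases hm : n - k = 0
      · have hkn' : k = n := by omega
        rw [hrec, hm]
        have c1 : coeff 0 (f ^ 0) = 1 := by simp
        have c2 : coeff 0 (Φ ^ k) = 1 := by
          rw [coeff_zero_eq_constantCoeff, map_pow, hΦ, one_pow]
        have c3 : coeff 0 (Φ ^ n) = 1 := by
          rw [coeff_zero_eq_constantCoeff, map_pow, hΦ, one_pow]
        rw [Finset.sum_range_one, c1, c2, c3, hkn']
        ring
      · set m := n - k with hmdef
        have hm1 : 1 ≤ m := by omega
        have hmn : m < n := by omega
        have hterm : ∀ j ∈ Finset.range (m + 1),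
            coeff j (Φ ^ k) * ((m : ℂ) * coeff m (f ^ j)) =
            (j : ℂ) * coeff j (Φ ^ k) * coeff (m - j) (Φ ^ m) := by
          intro j hj
          rw [Finset.mem_range] at hj
          rcases Nat.eq_zero_or_pos j with hj0 | hj0
          · subst hj0
            simp [PowerSeries.coeff_one, hm]
          · rw [IH m hmn j hj0 (by omega)]
            ring
        have step1 : (m : ℂ) * coeff n (f ^ k)
            = coeff (m - 1) (d⁄dX ℂ (Φ ^ k) * Φ ^ m) := by
          rw [hrec, Finset.mul_sum, ← aux_sum_deriv (Φ ^ k) (Φ ^ m) m hm1]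
          refine Finset.sum_congr rfl fun j hj => ?_
          rw [← hterm j hj]
          ring
        have step2 : (n : ℂ) * ((m : ℂ) * coeff n (f ^ k))
            = (k : ℂ) * ((m : ℂ) * coeff m (Φ ^ n)) := by
          rw [step1]
          have e1 : (n : ℂ) * coeff (m - 1) (d⁄dX ℂ (Φ ^ k) * Φ ^ m)
              = coeff (m - 1) (n • (d⁄dX ℂ (Φ ^ k) * Φ ^ m)) := by
            rw [map_nsmul, nsmul_eq_mul]
          have e2 : coeff (m - 1) ((k : ℕ) • d⁄dX ℂ (Φ ^ n))
              = (k : ℂ) * coeff (m - 1) (d⁄dX ℂ (Φ ^ n)) := by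
            rw [map_nsmul, nsmul_eq_mul]
          rw [e1, aux_deriv_mul Φ hk1 (by omega), e2, coeff_derivative]
          have hm' : m - 1 + 1 = m := by omega
          rw [hm', Nat.cast_sub hm1]
          push_cast
          ring
        have hmne : (m : ℂ) ≠ 0 := Nat.cast_ne_zero.mpr (by omega)
        apply mul_left_cancel₀ hmne
        calc (m : ℂ) * ((n : ℂ) * coeff n (f ^ k))
            = (n : ℂ) * ((m : ℂ) * coeff n (f ^ k)) := by ring
          _ = (k : ℂ) * ((m : ℂ) * coeff m (Φ ^ n)) := step2
          _ = (m : ℂ) * ((k : ℂ) * coeff m (Φ ^ n)) := by ring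
  intro N hN
  have h := key N 1 le_rfl hN
  rw [pow_one] at h
  have hN0 : (N : ℂ) ≠ 0 := Nat.cast_ne_zero.mpr (by omega)
  have h2 : coeff N f = coeff (N - 1) (Φ ^ N) / (N : ℂ) := by
    rw [eq_div_iff hN0]
    linear_combination h
  rw [h2]
  ring
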